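/- arXiv:2512.24581 — 9 statements merged into one kernel-verified Lean document; each statement's English description precedes it below -/
import Mathlib

section
/- Let n ≥ 5 and let V be a finite set of words over an n-letter alphabet, all of length L, such that for any two distinct u, v ∈ V the concatenation uv has local exponent at most n/(n-1). Then the maximum length of a common prefix of two distinct words of V is at most L/(n-1), and likewise for common suffixes. -/
open List

/-- `p` is a period of the word `w`. -/
def HasPeriod {α : Type*} (w : List α) (p : ℕ) : Prop :=
  1 ≤ p ∧ ∀ i, i + p < w.length → w[i]? = w[i + p]?

/-- minimal period of a word -/
noncomputable def per {α : Type*} (w : List α) : ℕ := sInf {p | _root_.HasPeriod w p}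

/-- local exponent of `w` is at most `q`: every nonempty factor has exponent ≤ q. -/
noncomputable def lexpLE {α : Type*} (w : List α) (q : ℚ) : Prop :=
  ∀ v : List α, v <:+: w → v ≠ [] → (v.length : ℚ) / per v ≤ q

/-- `v` is a (finite) factor of the infinite word `ω`. -/
def FactorOfInf {α : Type*} (v : List α) (ω : ℕ → α) : Prop :=
  ∃ i : ℕ, v = List.ofFn (fun j : Fin v.length => ω (i + j))

lemma main_aux {n L k : ℕ} {α : Type*} {w ω : List α} (hn : 5 ≤ n)
    (hw : w <:+: ω) (hwne : w ≠ []) (hlen : w.length = L + k)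
    (hper : _root_.HasPeriod w L) (hlex : lexpLE ω ((n : ℚ) / (n - 1))) :
    (k : ℚ) ≤ (L : ℚ) / (n - 1) := by
  have hperle : per w ≤ L := Nat.sInf_le hper
  have hmem : _root_.HasPeriod w (per w) := Nat.sInf_mem (⟨L, hper⟩ : {p | _root_.HasPeriod w p}.Nonempty)
  have h1 : 1 ≤ per w := hmem.1
  have hq := hlex w hw hwne
  rw [hlen] at hq
  have hN1 : (0 : ℚ) < (n : ℚ) - 1 := by
    have : (5 : ℚ) ≤ n := by exact_mod_cast hn
    linarith
  have hc : (0 : ℚ) < (per w : ℚ) := by exact_mod_cast h1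
  have hcL : ((per w : ℚ)) ≤ (L : ℚ) := by exact_mod_cast hperle
  rw [div_le_div_iff₀ hc hN1] at hq
  push_cast at hq
  rw [le_div_iff₀ hN1]
  have hN0 : (0 : ℚ) ≤ (n : ℚ) := by positivity
  nlinarith [mul_le_mul_of_nonneg_left hcL hN0]

lemma get?_of_prefix {α : Type*} {p u : List α} (h : p <+: u) {i : ℕ} (hi : i < p.length) :
    u[i]? = p[i]? := by
  obtain ⟨t, rfl⟩ := h
  rw [List.getElem?_append_left hi]

theorem stmt1 (n L : ℕ) (hn : 5 ≤ n) (V : Finset (List (Fin n)))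
    (hlen : ∀ v ∈ V, v.length = L)
    (hpair : ∀ u ∈ V, ∀ v ∈ V, u ≠ v → lexpLE (u ++ v) ((n : ℚ) / (n - 1))) :
    (∀ u ∈ V, ∀ v ∈ V, u ≠ v → ∀ p : List (Fin n), p <+: u → p <+: v →
        (p.length : ℚ) ≤ (L : ℚ) / (n - 1)) ∧
    (∀ u ∈ V, ∀ v ∈ V, u ≠ v → ∀ s : List (Fin n), s <:+ u → s <:+ v →
        (s.length : ℚ) ≤ (L : ℚ) / (n - 1)) := by
  have hN1 : (0 : ℚ) < (n : ℚ) - 1 := by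
    have : (5 : ℚ) ≤ n := by exact_mod_cast hn
    linarith
  constructor
  · intro u hu v hv huv p hpu hpv
    rcases eq_or_ne p [] with rfl | hpne
    · simp
      positivity
    have hLu : u.length = L := hlen u hu
    have hLv : v.length = L := hlen v hv
    have hpL : p.length ≤ L := hLu ▸ hpu.length_le
    have hL1 : 1 ≤ L := le_trans (List.length_pos_iff.mpr hpne) hpL
    refine main_aux (w := u ++ p) hn ?_ ?_ ?_ ?_ (hpair u hu v hv huv)
    · obtain ⟨t, rfl⟩ := hpv
      exact ⟨[], t, by simp⟩
    · simp [hpne]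
    · simp [hLu]
    · refine ⟨hL1, ?_⟩
      intro i hi
      simp only [List.length_append, hLu] at hi
      have hip : i < p.length := by omega
      have h1 : (u ++ p)[i]? = p[i]? := by
        rw [List.getElem?_append_left (by omega)]
        exact get?_of_prefix hpu hip
      have h2 : (u ++ p)[i + L]? = p[i]? := by
        rw [List.getElem?_append_right (by omega)]
        congr 1
        omega
      rw [h1, h2]
  · intro u hu v hv huv s hsu hsv
    rcases eq_or_ne s [] with rfl | hsne
    · simp
      positivity
    have hLu : u.length = L := hlen u hu
    have hLv : v.length = L := hlen v hv
    have hsL : s.length ≤ L := hLu ▸ hsu.length_le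
    have hL1 : 1 ≤ L := le_trans (List.length_pos_iff.mpr hsne) hsL
    refine main_aux (w := s ++ v) hn ?_ ?_ ?_ ?_ (hpair u hu v hv huv)
    · obtain ⟨t, rfl⟩ := hsu
      exact ⟨t, [], by simp⟩
    · simp [hsne]
    · simp [hLv, Nat.add_comm]
    · refine ⟨hL1, ?_⟩
      intro i hi
      simp only [List.length_append, hLv] at hi
      have his : i < s.length := by omega
      obtain ⟨t, htv⟩ := hsv
      have htl : t.length = L - s.length := by
        have := congrArg List.length htv
        simp at this
        omega
      have h1 : (s ++ v)[i]? = s[i]? := List.getElem?_append_left his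
      have h2 : (s ++ v)[i + L]? = s[i]? := by
        rw [List.getElem?_append_right (by omega)]
        rw [← htv, List.getElem?_append_right (by omega)]
        congr 1
        omega
      rw [h1, h2]
end

section
/- Let n ≥ 5 and let V be a set of words over an n-letter alphabet, all of length L, such that for any two distinct u, v ∈ V the local exponent of uv is at most n/(n-1). Then any word v that is a factor of two distinct words v₁, v₂ ∈ V satisfies |v| < 2L/(n-1). -/
open List

theorem stmt2 (n L : ℕ) (hn : 5 ≤ n) (V : Set (List (Fin n)))
    (hlen : ∀ v ∈ V, v.length = L)
    (hpair : ∀ u ∈ V, ∀ v ∈ V, u ≠ v → lexpLE (u ++ v) ((n : ℚ) / (n - 1)))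
    (v v₁ v₂ : List (Fin n)) (h₁ : v₁ ∈ V) (h₂ : v₂ ∈ V) (hne : v₁ ≠ v₂)
    (hf₁ : v <:+: v₁) (hf₂ : v <:+: v₂) :
    (v.length : ℚ) < 2 * L / (n - 1) := by
  classical
  have hn' : (5:ℚ) ≤ (n:ℚ) := by exact_mod_cast hn
  have hn1 : (0:ℚ) < (n:ℚ) - 1 := by linarith
  have hL1 : 1 ≤ L := by
    by_contra h
    have hL0 : L = 0 := by omega
    have e1 : v₁ = [] := List.length_eq_zero_iff.mp (by rw [hlen v₁ h₁, hL0])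
    have e2 : v₂ = [] := List.length_eq_zero_iff.mp (by rw [hlen v₂ h₂, hL0])
    exact hne (e1.trans e2.symm)
  have hL' : (1:ℚ) ≤ (L:ℚ) := by exact_mod_cast hL1
  rcases eq_or_ne v [] with hv | hv
  · rw [hv]
    simp only [List.length_nil, Nat.cast_zero]
    apply div_pos (by linarith) hn1
  · obtain ⟨a, b, hab⟩ := hf₁
    obtain ⟨c, d, hcd⟩ := hf₂
    have hm1 : 1 ≤ v.length := List.length_pos_iff.mpr hv
    -- the word u := (v ++ (b ++ c)) ++ v has period (v ++ (b ++ c)).length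
    have hperiod : _root_.HasPeriod ((v ++ (b ++ c)) ++ v) (v ++ (b ++ c)).length := by
      constructor
      · simp only [List.length_append]; omega
      · intro i hi
        have hilt : i < v.length := by
          simp only [List.length_append] at hi; omega
        rw [List.getElem?_append_left (by simp only [List.length_append]; omega :
              i < (v ++ (b ++ c)).length),
            List.getElem?_append_left hilt,
            List.getElem?_append_right
              (Nat.le_add_left (v ++ (b ++ c)).length i)]
        congr 1
        omega
    have hSne : {p | _root_.HasPeriod ((v ++ (b ++ c)) ++ v) p}.Nonempty := ⟨_, hperiod⟩
    have hperle : per ((v ++ (b ++ c)) ++ v) ≤ (v ++ (b ++ c)).length :=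
      Nat.sInf_le hperiod
    have hper1 : 1 ≤ per ((v ++ (b ++ c)) ++ v) := (Nat.sInf_mem hSne).1
    have hinf : ((v ++ (b ++ c)) ++ v) <:+: (v₁ ++ v₂) := by
      refine ⟨a, d, ?_⟩
      rw [← hab, ← hcd]
      simp [List.append_assoc]
    have hq := hpair v₁ h₁ v₂ h₂ hne _ hinf (by simp [hv])
    -- lengths
    have hl1 : a.length + v.length + b.length = L := by
      have := hlen v₁ h₁
      rw [← hab] at this
      simp only [List.length_append] at this
      omega
    have hl2 : c.length + v.length + d.length = L := by
      have := hlen v₂ h₂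
      rw [← hcd] at this
      simp only [List.length_append] at this
      omega
    -- arithmetic
    set P := per ((v ++ (b ++ c)) ++ v) with hP
    have hPq : (0:ℚ) < (P:ℚ) := by exact_mod_cast hper1.trans_lt' Nat.zero_lt_one
    have hlu : ((((v ++ (b ++ c)) ++ v).length : ℕ) : ℚ)
        = (v.length : ℚ) + b.length + c.length + v.length := by
      push_cast [List.length_append]
      ring
    rw [hlu, div_le_div_iff₀ hPq hn1] at hq
    have hPle : (P:ℚ) ≤ (v.length : ℚ) + b.length + c.length := by
      have : ((v ++ (b ++ c)).length : ℚ) = (v.length : ℚ) + b.length + c.length := by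
        push_cast [List.length_append]; ring
      rw [← this]
      exact_mod_cast hperle
    have hbc : (v.length : ℚ) + b.length + c.length ≤ 2 * L - v.length := by
      have h1 : (a.length : ℚ) + v.length + b.length = L := by exact_mod_cast hl1
      have h2 : (c.length : ℚ) + v.length + d.length = L := by exact_mod_cast hl2
      have ha0 : (0:ℚ) ≤ (a.length : ℚ) := by positivity
      have hd0 : (0:ℚ) ≤ (d.length : ℚ) := by positivity
      linarith
    have hm1' : (1:ℚ) ≤ (v.length : ℚ) := by exact_mod_cast hm1
    rw [lt_div_iff₀ hn1]
    nlinarith [mul_le_mul_of_nonneg_left hPle (by linarith : (0:ℚ) ≤ (n:ℚ)),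
      mul_nonneg (by positivity : (0:ℚ) ≤ (b.length:ℚ) + c.length) (le_of_lt hn1)]
end

section
/- Let n ≥ 5 and let V be a set of words of common length L over an n-letter alphabet such that any concatenation of two distinct words of V has local exponent at most n/(n-1). If v₁, v₂, v₃ ∈ V are pairwise distinct and v is a factor of v₁ and of v₂v₃ such that v is not a factor of v₂ and not a factor of v₃, then |v| < 2L/(n-1). -/
open List

lemma hasPeriod_sandwich {α : Type*} (x y : List α) (hx : x ≠ []) :
    _root_.HasPeriod (x ++ y ++ x) (x.length + y.length) := by
  have hxl : 0 < x.length := List.length_pos_iff.mpr hx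
  refine ⟨by omega, ?_⟩
  intro i hi
  simp only [List.length_append] at hi
  have hix : i < x.length := by omega
  have h1 : (x ++ (y ++ x))[i]? = x[i]? := List.getElem?_append_left hix
  have h2 : (x ++ (y ++ x))[i + (x.length + y.length)]? = x[i]? := by
    rw [List.getElem?_append_right (by omega),
      List.getElem?_append_right (by omega)]
    congr 1
    omega
  rw [show x ++ y ++ x = x ++ (y ++ x) from List.append_assoc x y x, h1, h2]

lemma exponent_bound {α : Type*} {w : List α} {q : ℚ} (hw : lexpLE w q)
    (x y : List α) (hx : x ≠ []) (hinf : x ++ y ++ x <:+: w) :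
    ((x.length : ℚ) + y.length + x.length) / (x.length + y.length) ≤ q := by
  have hxl : 0 < x.length := List.length_pos_iff.mpr hx
  have hmem : (x.length + y.length) ∈ {p | _root_.HasPeriod (x ++ y ++ x) p} :=
    hasPeriod_sandwich x y hx
  have h1 : per (x ++ y ++ x) ≤ x.length + y.length := Nat.sInf_le hmem
  have h2 : 1 ≤ per (x ++ y ++ x) := (Nat.sInf_mem ⟨_, hmem⟩).1
  have h3 := hw _ hinf (by simp [hx])
  calc ((x.length : ℚ) + y.length + x.length) / (x.length + y.length)
      ≤ (((x ++ y ++ x).length : ℚ)) / per (x ++ y ++ x) := by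
        have hlen' : (((x ++ y ++ x).length : ℕ) : ℚ) = x.length + y.length + x.length := by
          simp only [List.length_append]; push_cast; ring
        rw [hlen']
        have hper_pos : (0:ℚ) < per (x ++ y ++ x) := by exact_mod_cast h2
        have hper_le : ((per (x ++ y ++ x)):ℚ) ≤ x.length + y.length := by exact_mod_cast h1
        gcongr
    _ ≤ q := h3

theorem stmt3 (n L : ℕ) (hn : 5 ≤ n) (V : Set (List (Fin n)))
    (hlen : ∀ v ∈ V, v.length = L)
    (hpair : ∀ u ∈ V, ∀ v ∈ V, u ≠ v → lexpLE (u ++ v) ((n : ℚ) / (n - 1)))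
    (v₁ v₂ v₃ : List (Fin n)) (h₁ : v₁ ∈ V) (h₂ : v₂ ∈ V) (h₃ : v₃ ∈ V)
    (h12 : v₁ ≠ v₂) (h13 : v₁ ≠ v₃) (h23 : v₂ ≠ v₃)
    (v : List (Fin n)) (hf₁ : v <:+: v₁) (hf₂ : v <:+: v₂ ++ v₃)
    (hn₂ : ¬ v <:+: v₂) (hn₃ : ¬ v <:+: v₃) :
    (v.length : ℚ) < 2 * L / (n - 1) := by
  obtain ⟨t, u, htu⟩ := hf₂
  set k := t.length with hk
  have hdrop : (v₂ ++ v₃).drop k = v ++ u := by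
    rw [← htu, List.append_assoc, List.drop_left]
  have hv : ((v₂ ++ v₃).drop k).take v.length = v := by
    rw [hdrop, List.take_left]
  have hk1 : k < v₂.length := by
    by_contra h
    push_neg at h
    apply hn₃
    have hd2 : (v₂ ++ v₃).drop k = v₃.drop (k - v₂.length) := by
      conv_lhs => rw [show k = v₂.length + (k - v₂.length) by omega]
      exact List.drop_length_add_append (k - v₂.length)
    rw [hd2] at hv
    rw [← hv]
    exact ((List.take_prefix _ _).isInfix).trans (List.drop_suffix _ _).isInfix
  have hk2 : v₂.length < k + v.length := by
    by_contra h
    push_neg at h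
    apply hn₂
    rw [List.drop_append_of_le_length (le_of_lt hk1),
      List.take_append_of_le_length (by simp; omega)] at hv
    rw [← hv]
    exact ((List.take_prefix _ _).isInfix).trans (List.drop_suffix _ _).isInfix
  set s := v₂.drop k with hs
  set p := v₃.take (k + v.length - v₂.length) with hp
  have hslen : s.length = v₂.length - k := List.length_drop
  have hv2 : v = s ++ p := by
    rw [← hv, List.drop_append_of_le_length (le_of_lt hk1),
      List.take_append]
    congr 1
    · exact List.take_of_length_le (by simp only [hs, List.length_drop]; omega)
    · congr 1
      simp only [hs, List.length_drop]
      omega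
  have hs_ne : s ≠ [] := by
    intro h
    rw [h] at hslen
    simp at hslen
    omega
  have hp_ne : p ≠ [] := by
    intro h
    apply hn₂
    rw [hv2, h, List.append_nil]
    exact (List.drop_suffix _ _).isInfix
  obtain ⟨c, hc⟩ : p <+: v₃ := List.take_prefix _ _
  obtain ⟨t', ht'⟩ : s <:+ v₂ := List.drop_suffix _ _
  obtain ⟨a, b, hab⟩ := hf₁
  have hinf1 : s ++ a ++ s <:+: v₂ ++ v₁ := by
    refine ⟨t', p ++ b, ?_⟩
    rw [← ht', ← hab, hv2]
    simp [List.append_assoc]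
  have hinf2 : p ++ b ++ p <:+: v₁ ++ v₃ := by
    refine ⟨a ++ s, c, ?_⟩
    rw [← hab, hv2, ← hc]
    simp [List.append_assoc]
  have hq1 := exponent_bound (hpair v₂ h₂ v₁ h₁ h12.symm) s a hs_ne hinf1
  have hq2 := exponent_bound (hpair v₁ h₁ v₃ h₃ h13) p b hp_ne hinf2
  have hL : a.length + v.length + b.length = L := by
    rw [← hlen v₁ h₁, ← hab]; simp [List.length_append]; omega
  have hvlen : v.length = s.length + p.length := by rw [hv2]; simp
  have hsl : 1 ≤ s.length := List.length_pos_iff.mpr hs_ne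
  have hpl : 1 ≤ p.length := List.length_pos_iff.mpr hp_ne
  have hn' : (5 : ℚ) ≤ (n : ℚ) := by exact_mod_cast hn
  have hslq : (1 : ℚ) ≤ (s.length : ℚ) := by exact_mod_cast hsl
  have hplq : (1 : ℚ) ≤ (p.length : ℚ) := by exact_mod_cast hpl
  rw [div_le_div_iff₀ (by positivity) (by linarith)] at hq1 hq2
  rw [lt_div_iff₀ (by linarith)]
  have hLq : (a.length : ℚ) + v.length + b.length = L := by exact_mod_cast hL
  have hvq : (v.length : ℚ) = s.length + p.length := by exact_mod_cast hvlen
  nlinarith [hq1, hq2, hLq, hvq, hslq, hplq,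
    (by positivity : (0:ℚ) ≤ (a.length : ℚ)), (by positivity : (0:ℚ) ≤ (b.length : ℚ))]
end

section
/- Let n ≥ 5 and let V be a set of words of common length L over an n-letter alphabet such that any concatenation uv of two distinct u, v ∈ V has local exponent at most n/(n-1). If v₁, v₂, v₃, v₄ ∈ V are pairwise distinct and v is a common factor of v₁v₂ and v₃v₄, then |v| ≤ 2L/(n-1). -/
open List

/-- From a factor with a visible period `P` in a word of local exponent ≤ n/(n-1),
get `(n-1) * len ≤ P` where the factor has length `P + len`. -/
lemma key_bound {n : ℕ} (hn : 5 ≤ n) (w : List (Fin n))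
    (hq : lexpLE w ((n : ℚ) / (n - 1)))
    (start P len : ℕ) (hP : 1 ≤ P) (hfit : start + P + len ≤ w.length)
    (hper : ∀ t, t < len → w[start + t]? = w[start + P + t]?) :
    (n - 1) * len ≤ P := by
  set z := (w.drop start).take (P + len) with hz
  have hzlen : z.length = P + len := by
    simp only [hz, List.length_take, List.length_drop]
    omega
  have hzget : ∀ k, k < P + len → z[k]? = w[start + k]? := by
    intro k hk
    rw [hz, List.getElem?_take_of_lt hk, List.getElem?_drop]
  have hinf : z <:+: w :=
    ((List.take_prefix _ _).isInfix).trans ((List.drop_suffix start w).isInfix)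
  have hne : z ≠ [] := by
    intro h
    rw [h] at hzlen
    simp at hzlen
    omega
  have hperz : _root_.HasPeriod z P := by
    refine ⟨hP, fun k hk => ?_⟩
    rw [hzlen] at hk
    rw [hzget k (by omega), hzget (k + P) (by omega)]
    have h := hper k (by omega)
    rwa [show start + P + k = start + (k + P) by omega] at h
  have hmem : P ∈ {p | _root_.HasPeriod z p} := hperz
  have hle : per z ≤ P := Nat.sInf_le hmem
  have hpos : 1 ≤ per z := (Nat.sInf_mem ⟨P, hmem⟩ : _root_.HasPeriod z (per z)).1
  have hq' := hq z hinf hne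
  rw [hzlen] at hq'
  have h1 : (0 : ℚ) < (per z : ℚ) := by exact_mod_cast hpos
  have hn5 : (5 : ℚ) ≤ (n : ℚ) := by exact_mod_cast hn
  have hn1 : (0 : ℚ) < (n : ℚ) - 1 := by linarith
  rw [div_le_div_iff₀ h1 hn1] at hq'
  have hle' : (per z : ℚ) ≤ (P : ℚ) := by exact_mod_cast hle
  have hmain : ((n : ℚ) - 1) * (len : ℚ) ≤ (P : ℚ) := by
    have h2 : (n : ℚ) * (per z : ℚ) ≤ (n : ℚ) * (P : ℚ) := by nlinarith
    push_cast at hq'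
    nlinarith
  have hcast : (((n - 1 : ℕ) : ℚ)) * (len : ℚ) ≤ (P : ℚ) := by
    rwa [Nat.cast_sub (by omega), Nat.cast_one]
  exact_mod_cast hcast

lemma exists_occ {α : Type*} {v w : List α} (h : v <:+: w) :
    ∃ i, i + v.length ≤ w.length ∧ ∀ k, k < v.length → v[k]? = w[i + k]? := by
  obtain ⟨s, t, rfl⟩ := h
  refine ⟨s.length, by simp [List.length_append], fun k hk => ?_⟩
  rw [List.append_assoc, List.getElem?_append_right (Nat.le_add_right _ _)]
  simp only [Nat.add_sub_cancel_left]
  rw [List.getElem?_append_left hk]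

lemma core_bound {n L : ℕ} (hn : 5 ≤ n) (a b c d v : List (Fin n))
    (ha : a.length = L) (hb : b.length = L) (hc : c.length = L) (hd : d.length = L)
    (hca : lexpLE (c ++ a) ((n : ℚ) / (n - 1)))
    (hdb : lexpLE (d ++ b) ((n : ℚ) / (n - 1)))
    (had : lexpLE (a ++ d) ((n : ℚ) / (n - 1)))
    (i j : ℕ) (hij : i ≤ j)
    (hiA : i + v.length ≤ 2 * L) (hiB : j + v.length ≤ 2 * L)
    (occA : ∀ k, k < v.length → v[k]? = (a ++ b)[i + k]?)
    (occB : ∀ k, k < v.length → v[k]? = (c ++ d)[j + k]?) :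
    (n - 1) * v.length ≤ 2 * L := by
  set m := v.length with hm
  set p := j - i with hp
  set u0 := min (L - j) m with hu0
  set u1 := min (L - i) m with hu1
  have hu01 : u0 ≤ u1 := by omega
  have hu1m : u1 ≤ m := by omega
  -- key1 : common prefix part, in word c ++ a
  have key1 : (n - 1) * u0 ≤ L - p := by
    rcases Nat.eq_zero_or_pos u0 with h0 | hpos
    · simp [h0]
    have hjL : j < L := by omega
    apply key_bound hn (c ++ a) hca j (L - p) u0 (by omega)
      (by simp [List.length_append, hc, ha]; omega)
    intro t ht
    have e1 : (c ++ a)[j + t]? = (c)[j + t]? :=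
      List.getElem?_append_left (by rw [hc]; omega)
    have e2 : (c ++ a)[j + (L - p) + t]? = a[i + t]? := by
      rw [show j + (L - p) + t = L + (i + t) by omega,
        List.getElem?_append_right (by rw [hc]; omega)]
      congr 1
      rw [hc]; omega
    have hv1 : v[t]? = (c)[j + t]? := by
      have h := occB t (by omega)
      rwa [List.getElem?_append_left (by rw [hc]; omega)] at h
    have hv2 : v[t]? = a[i + t]? := by
      have h := occA t (by omega)
      rwa [List.getElem?_append_left (by rw [ha]; omega)] at h
    rw [e1, e2, ← hv1, ← hv2]
  -- key2 : common suffix part, in word d ++ b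
  have key2 : (n - 1) * (m - u1) ≤ L - p := by
    rcases Nat.eq_zero_or_pos (m - u1) with h0 | hpos
    · simp [h0]
    have hu1lt : u1 < m := by omega
    apply key_bound hn (d ++ b) hdb (j + u1 - L) (L - p) (m - u1) (by omega)
      (by simp [List.length_append, hd, hb]; omega)
    intro t ht
    have hpos1 : L ≤ j + (u1 + t) := by omega
    have hpos2 : L ≤ i + (u1 + t) := by omega
    have e1 : (d ++ b)[j + u1 - L + t]? = d[j + u1 - L + t]? :=
      List.getElem?_append_left (by rw [hd]; omega)
    have e2 : (d ++ b)[j + u1 - L + (L - p) + t]? = b[i + u1 + t - L]? := by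
      rw [show j + u1 - L + (L - p) + t = i + u1 + t by omega,
        List.getElem?_append_right (by rw [hd]; omega)]
      congr 1
      rw [hd]
    have hv1 : v[u1 + t]? = d[j + u1 - L + t]? := by
      have h := occB (u1 + t) (by omega)
      rw [List.getElem?_append_right (by rw [hc]; omega)] at h
      rwa [show j + (u1 + t) - c.length = j + u1 - L + t by rw [hc]; omega] at h
    have hv2 : v[u1 + t]? = b[i + u1 + t - L]? := by
      have h := occA (u1 + t) (by omega)
      rw [List.getElem?_append_right (by rw [ha]; omega)] at h
      rwa [show i + (u1 + t) - a.length = i + u1 + t - L by rw [ha]; omega] at h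
    rw [e1, e2, ← hv1, ← hv2]
  -- key3 : middle part, in word a ++ d
  have key3 : (n - 1) * (u1 - u0) ≤ p := by
    rcases Nat.eq_zero_or_pos (u1 - u0) with h0 | hpos
    · simp [h0]
    have hij' : i < j := by omega
    apply key_bound hn (a ++ d) had (i + u0) p (u1 - u0) (by omega)
      (by simp [List.length_append, ha, hd]; omega)
    intro t ht
    have hlt : i + (u0 + t) < L := by omega
    have hge : L ≤ j + (u0 + t) := by omega
    have e1 : (a ++ d)[i + u0 + t]? = a[i + u0 + t]? :=
      List.getElem?_append_left (by rw [ha]; omega)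
    have e2 : (a ++ d)[i + u0 + p + t]? = d[j + u0 + t - L]? := by
      rw [show i + u0 + p + t = j + (u0 + t) by omega,
        List.getElem?_append_right (by rw [ha]; omega)]
      congr 1
      rw [ha]; omega
    have hv1 : v[u0 + t]? = a[i + u0 + t]? := by
      have h := occA (u0 + t) (by omega)
      rwa [List.getElem?_append_left (by rw [ha]; omega), show i + (u0 + t) = i + u0 + t by omega] at h
    have hv2 : v[u0 + t]? = d[j + u0 + t - L]? := by
      have h := occB (u0 + t) (by omega)
      rw [List.getElem?_append_right (by rw [hc]; omega)] at h
      rwa [show j + (u0 + t) - c.length = j + u0 + t - L by rw [hc]; omega] at h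
    rw [e1, e2, ← hv1, ← hv2]
  -- combine
  have e : (n - 1) * m ≤ (n - 1) * u0 + (n - 1) * (u1 - u0) + (n - 1) * (m - u1) := by
    rw [← Nat.mul_add, ← Nat.mul_add]
    exact Nat.mul_le_mul_left _ (by omega)
  by_cases hpL : p ≤ L
  · have h2 : (n - 1) * u0 + (n - 1) * (u1 - u0) + (n - 1) * (m - u1)
        ≤ (L - p) + p + (L - p) :=
      Nat.add_le_add (Nat.add_le_add key1 key3) key2
    exact (e.trans h2).trans (by omega)
  · have hLp : L - p = 0 := by omega
    rw [hLp, Nat.le_zero, Nat.mul_eq_zero] at key1 key2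
    have hu0z : u0 = 0 := by omega
    have hu1e : u1 = m := by omega
    have h3 : (n - 1) * m ≤ p := by
      rw [show m = u1 - u0 by omega]
      exact key3
    exact h3.trans (by omega)

theorem stmt4 (n L : ℕ) (hn : 5 ≤ n) (V : Set (List (Fin n)))
    (hlen : ∀ v ∈ V, v.length = L)
    (hpair : ∀ u ∈ V, ∀ v ∈ V, u ≠ v → lexpLE (u ++ v) ((n : ℚ) / (n - 1)))
    (v₁ v₂ v₃ v₄ : List (Fin n)) (h₁ : v₁ ∈ V) (h₂ : v₂ ∈ V) (h₃ : v₃ ∈ V) (h₄ : v₄ ∈ V)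
    (h12 : v₁ ≠ v₂) (h13 : v₁ ≠ v₃) (h14 : v₁ ≠ v₄)
    (h23 : v₂ ≠ v₃) (h24 : v₂ ≠ v₄) (h34 : v₃ ≠ v₄)
    (v : List (Fin n)) (hf₁ : v <:+: v₁ ++ v₂) (hf₂ : v <:+: v₃ ++ v₄) :
    (v.length : ℚ) ≤ 2 * L / (n - 1) := by
  obtain ⟨i, hiA, occA⟩ := exists_occ hf₁
  obtain ⟨j, hiB, occB⟩ := exists_occ hf₂
  have l1 : v₁.length = L := hlen v₁ h₁
  have l2 : v₂.length = L := hlen v₂ h₂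
  have l3 : v₃.length = L := hlen v₃ h₃
  have l4 : v₄.length = L := hlen v₄ h₄
  have lenA : (v₁ ++ v₂).length = 2 * L := by simp [List.length_append, l1, l2]; omega
  have lenB : (v₃ ++ v₄).length = 2 * L := by simp [List.length_append, l3, l4]; omega
  rw [lenA] at hiA
  rw [lenB] at hiB
  have hfin : (n - 1) * v.length ≤ 2 * L := by
    rcases le_total i j with h | h
    · exact core_bound hn v₁ v₂ v₃ v₄ v l1 l2 l3 l4
        (hpair v₃ h₃ v₁ h₁ h13.symm) (hpair v₄ h₄ v₂ h₂ h24.symm)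
        (hpair v₁ h₁ v₄ h₄ h14) i j h hiA hiB occA occB
    · exact core_bound hn v₃ v₄ v₁ v₂ v l3 l4 l1 l2
        (hpair v₁ h₁ v₃ h₃ h13) (hpair v₂ h₂ v₄ h₄ h24)
        (hpair v₃ h₃ v₂ h₂ h23.symm) j i h hiB hiA occB occA
  have hn1 : (0 : ℚ) < (n : ℚ) - 1 := by
    have : (5 : ℚ) ≤ (n : ℚ) := by exact_mod_cast hn
    linarith
  rw [le_div_iff₀ hn1]
  have hcast : (((n - 1 : ℕ) : ℚ)) * (v.length : ℚ) ≤ ((2 * L : ℕ) : ℚ) := by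
    exact_mod_cast hfin
  rw [Nat.cast_sub (by omega), Nat.cast_one] at hcast
  push_cast at hcast ⊢
  linarith
end

section
/- Let n ≥ 5, let V be a set of words of common length L over an n-letter alphabet such that any concatenation of two distinct elements of V has local exponent at most n/(n-1), and let u, v, w ∈ V be pairwise distinct. Then the word v cannot occur as a factor of the concatenation uw. -/
open List

theorem stmt5 (n L : ℕ) (hn : 5 ≤ n) (V : Set (List (Fin n)))
    (hlen : ∀ v ∈ V, v.length = L)
    (hpair : ∀ u ∈ V, ∀ v ∈ V, u ≠ v → lexpLE (u ++ v) ((n : ℚ) / (n - 1)))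
    (u v w : List (Fin n)) (hu : u ∈ V) (hv : v ∈ V) (hw : w ∈ V)
    (huv : u ≠ v) (huw : u ≠ w) (hvw : v ≠ w) :
    ¬ v <:+: u ++ w := by
  intro hinf
  obtain ⟨s, t, hst⟩ := hinf
  have hu_len := hlen u hu
  have hv_len := hlen v hv
  have hw_len := hlen w hw
  set i := s.length with hi
  have hlen2 : i + (L + t.length) = L + L := by
    have h := congrArg List.length hst
    simp only [List.length_append, hv_len, hu_len, hw_len] at h
    omega
  have hiL : i ≤ L := by omega
  -- v = u.drop i ++ w.take i
  have h1 : v ++ t = (u ++ w).drop i := by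
    rw [← hst, List.append_assoc]
    exact (List.drop_left (l₁ := s) (l₂ := v ++ t)).symm
  have hveq : v = u.drop i ++ w.take i := by
    have h2 : v = (v ++ t).take L := by
      rw [← hv_len]; exact (List.take_left (l₁ := v) (l₂ := t)).symm
    rw [h1, List.drop_append, List.take_append] at h2
    have hd : (u.drop i).length = L - i := by rw [List.length_drop, hu_len]
    rw [List.take_of_length_le (by omega : (u.drop i).length ≤ L)] at h2
    rw [hd] at h2
    have : i - u.length = 0 := by omega
    rw [this, List.drop_zero] at h2
    have : L - (L - i) = i := by omega
    rw [this] at h2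
    exact h2
  rcases Nat.eq_zero_or_pos i with hi0 | hipos
  · -- i = 0 : v = u
    apply huv
    rw [hveq, hi0, List.drop_zero, List.take_zero, List.append_nil]
  rcases eq_or_lt_of_le hiL with hiL' | hiL'
  · -- i = L : v = w
    apply hvw
    have e1 : u.drop L = [] := by
      have h := List.drop_length (l := u); rwa [hu_len] at h
    have e2 : w.take L = w := by
      have h := List.take_length (l := w); rwa [hw_len] at h
    rw [hveq, hiL', e1, e2, List.nil_append]
  · -- 0 < i < L : square
    set d := u.drop i with hdd
    have hd : d.length = L - i := by rw [hdd, List.length_drop, hu_len]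
    have hdpos : 1 ≤ d.length := by omega
    have hinfix : (d ++ d) <:+: u ++ v := by
      refine ⟨u.take i, w.take i, ?_⟩
      rw [hveq]
      conv_rhs => rw [← List.take_append_drop i u, ← hdd]
      simp only [List.append_assoc]
    have hper : _root_.HasPeriod (d ++ d) d.length := by
      constructor
      · exact hdpos
      · intro j hj
        have hj' : j < d.length := by
          simp only [List.length_append] at hj; omega
        rw [List.getElem?_append_left hj',
          List.getElem?_append_right (by omega : d.length ≤ j + d.length)]
        congr 1
        omega
    have hle : per (d ++ d) ≤ d.length := Nat.sInf_le hper
    have hmem : per (d ++ d) ∈ {p | _root_.HasPeriod (d ++ d) p} :=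
      Nat.sInf_mem ⟨d.length, hper⟩
    have hpos : 1 ≤ per (d ++ d) := hmem.1
    have H := hpair u hu v hv huv (d ++ d) hinfix
      (by
        intro h
        rcases List.append_eq_nil_iff.mp h with ⟨h1', _⟩
        rw [h1'] at hdpos
        simp at hdpos)
    have h2 : (2 : ℚ) ≤ ((d ++ d).length : ℚ) / per (d ++ d) := by
      rw [le_div_iff₀ (by exact_mod_cast hpos : (0:ℚ) < per (d ++ d))]
      have : 2 * per (d ++ d) ≤ (d ++ d).length := by
        simp only [List.length_append]; omega
      exact_mod_cast this
    have hn5 : (5 : ℚ) ≤ (n : ℚ) := by exact_mod_cast hn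
    have hlt : (n : ℚ) / ((n : ℚ) - 1) < 2 := by
      rw [div_lt_iff₀ (by linarith)]
      linarith
    linarith
end

section
/- Let n ≥ 5, let w be a word over an n-letter alphabet all of whose factors have exponent at most n/(n-1), and let 0 ≤ ε ≤ 1/(n-1). If xyx is a factor of w with |x| = 2, then (|xyx| + ε)/|xy| ≤ n/(n-1). -/
open List

/-- If a nonempty factor has period `p`, threshold exponent bound gives a length bound. -/
lemma fac_period {n : ℕ} (hn : 5 ≤ n) {w v : List (Fin n)}
    (hthr : lexpLE w ((n : ℚ) / (n - 1))) (hv : v <:+: w) (hne : v ≠ [])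
    {p : ℕ} (hp : _root_.HasPeriod v p) : ((n : ℤ) - 1) * v.length ≤ n * p := by
  have hmem : _root_.HasPeriod v (per v) := Nat.sInf_mem (⟨p, hp⟩ : Set.Nonempty {q | _root_.HasPeriod v q})
  have hle : per v ≤ p := Nat.sInf_le hp
  have h1 : 1 ≤ per v := hmem.1
  have hq := hthr v hv hne
  have hn1 : (0:ℚ) < (n:ℚ) - 1 := by
    have : (5:ℚ) ≤ n := by exact_mod_cast hn
    linarith
  have hq0 : (0:ℚ) < (per v : ℚ) := by exact_mod_cast h1
  rw [div_le_div_iff₀ hq0 hn1] at hq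
  have h2 : ((n:ℚ) - 1) * v.length ≤ (n : ℚ) * p := by
    have hpv : (per v : ℚ) ≤ (p : ℚ) := by exact_mod_cast hle
    have hn0 : (0:ℚ) ≤ (n:ℚ) := by positivity
    nlinarith [hq]
  exact_mod_cast h2

/-- A repetition inside a factor of `w` gives the period bound. -/
lemma rep_bound {n : ℕ} (hn : 5 ≤ n) {w u : List (Fin n)}
    (hthr : lexpLE w ((n : ℚ) / (n - 1))) (hu : u <:+: w)
    (i p c : ℕ) (hp : 1 ≤ p) (hlen : i + p + c < u.length)
    (hrep : ∀ k, k ≤ c → u[i + k]? = u[i + p + k]?) :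
    ((n : ℤ) - 1) * (p + c + 1) ≤ n * p := by
  set v := (u.drop i).take (p + c + 1) with hv
  have hvlen : v.length = p + c + 1 := by
    simp only [hv, List.length_take, List.length_drop]
    omega
  have hvu : v <:+: u :=
    (((u.drop i).take_prefix (p + c + 1)).isInfix).trans (u.drop_suffix i).isInfix
  have hget : ∀ k, k < p + c + 1 → v[k]? = u[i + k]? := by
    intro k hk
    rw [hv, List.getElem?_take_of_lt hk, List.getElem?_drop]
  have hper : _root_.HasPeriod v p := by
    refine ⟨hp, fun k hk => ?_⟩
    rw [hvlen] at hk
    rw [hget k (by omega), hget (k + p) (by omega)]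
    rw [show i + (k + p) = i + p + k from by omega]
    exact hrep k (by omega)
  have hvne : v ≠ [] := by
    intro h
    rw [h] at hvlen
    simp at hvlen
  have h := fac_period hn hthr (hvu.trans hu) hvne hper
  rw [hvlen] at h
  push_cast at h ⊢
  linarith

/-- Pigeonhole: an (N+4)-window of distinct letters plus two extra distinct letters
cannot fit in an (N+5)-letter alphabet. -/
lemma pigeon (N s : ℕ) (f : ℕ → Fin (N + 5)) (a b : Fin (N + 5))
    (hinj : ∀ k l, k < l → l < N + 4 → f (s + k) ≠ f (s + l))
    (ha : ∀ k, k < N + 4 → a ≠ f (s + k))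
    (hb : ∀ k, k < N + 4 → b ≠ f (s + k))
    (hab : a ≠ b) : False := by
  classical
  set T : Finset (Fin (N + 5)) := (Finset.range (N + 4)).image (fun k => f (s + k)) with hT
  have hcard : T.card = N + 4 := by
    rw [hT, Finset.card_image_of_injOn, Finset.card_range]
    intro k hk l hl hkl
    simp only [Finset.coe_range, Set.mem_Iio] at hk hl
    rcases lt_trichotomy k l with h | h | h
    · exact absurd hkl (hinj k l h hl)
    · exact h
    · exact absurd hkl.symm (hinj l k h hk)
  have haT : a ∉ T := by
    simp only [hT, Finset.mem_image, Finset.mem_range]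
    rintro ⟨k, hk, hke⟩
    exact ha k hk hke.symm
  have hbT : b ∉ T := by
    simp only [hT, Finset.mem_image, Finset.mem_range]
    rintro ⟨k, hk, hke⟩
    exact hb k hk hke.symm
  have h1 : (insert a (insert b T)).card = N + 6 := by
    rw [Finset.card_insert_of_notMem (by simp [haT, hab]),
      Finset.card_insert_of_notMem hbT, hcard]
  have h2 := Finset.card_le_univ (insert a (insert b T))
  rw [h1, Fintype.card_fin] at h2
  omega

/-- The combinatorial core: a word of length 2n over n = N+5 letters satisfying the
threshold distance constraints cannot have a border of length 2. -/
lemma comb (N : ℕ) (f : ℕ → Fin (N + 5))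
    (S : ∀ i j, i < j → j < 2 * N + 10 → f i = f j → N + 4 ≤ j - i)
    (P2 : ∀ i p, 1 ≤ p → i + 1 + p < 2 * N + 10 → f i = f (i + p) →
      f (i + 1) = f (i + 1 + p) → 2 * N + 8 ≤ p)
    (b0 : f 0 = f (2 * N + 8)) (b1 : f 1 = f (2 * N + 9)) : False := by
  have D : ∀ i j, i < j → j < 2 * N + 10 → j - i < N + 4 → f i ≠ f j := by
    intro i j h1 h2 h3 e
    have := S i j h1 h2 e
    omega
  by_cases hc : f (N + 4) = f (2 * N + 8)
  · -- Case 1 : the letter at position 0 also occurs at n-1.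
    have h1n : f (N + 5) ≠ f (2 * N + 9) := by
      intro e
      have := P2 (N + 4) (N + 4) (by omega) (by omega)
        (by convert hc using 2 <;> omega) (by convert e using 2 <;> omega)
      omega
    have hq : f (N + 3) ≠ f (2 * N + 7) := by
      intro e
      have := P2 (N + 3) (N + 4) (by omega) (by omega)
        (by convert e using 2 <;> omega) (by convert hc using 2 <;> omega)
      omega
    refine pigeon N (N + 3) f (f 1) (f (2 * N + 7)) ?_ ?_ ?_ ?_
    · intro k l hkl hl e
      exact D (N + 3 + k) (N + 3 + l) (by omega) (by omega) (by omega) e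
    · intro k hk e
      by_cases h2 : k = 2
      · subst h2
        refine h1n ?_
        have h := e.symm.trans b1
        convert h using 2 <;> omega
      · rcases Nat.lt_or_ge k 2 with h | h
        · exact D 1 (N + 3 + k) (by omega) (by omega) (by omega) e
        · exact D (N + 3 + k) (2 * N + 9) (by omega) (by omega) (by omega) (e.symm.trans b1)
    · intro k hk e
      by_cases h0 : k = 0
      · subst h0
        exact hq (by simpa using e.symm)
      · exact D (N + 3 + k) (2 * N + 7) (by omega) (by omega) (by omega) e.symm
    · intro e
      exact D (2 * N + 7) (2 * N + 9) (by omega) (by omega) (by omega) (e.symm.trans b1)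
  · -- Case 2 : the letter at position 0 does not occur at n-1.
    have hb2 : f (N + 3) = f (2 * N + 7) := by
      by_contra hne
      refine pigeon N (N + 3) f (f 0) (f (2 * N + 7)) ?_ ?_ ?_ ?_
      · intro k l hkl hl e
        exact D (N + 3 + k) (N + 3 + l) (by omega) (by omega) (by omega) e
      · intro k hk e
        by_cases h1 : k = 1
        · subst h1
          refine hc ?_
          have h := e.symm.trans b0
          convert h using 2 <;> omega
        · rcases Nat.lt_or_ge k 1 with h | h
          · have h0 : k = 0 := by omega
            subst h0
            exact D 0 (N + 3 + 0) (by omega) (by omega) (by omega) e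
          · exact D (N + 3 + k) (2 * N + 8) (by omega) (by omega) (by omega) (e.symm.trans b0)
      · intro k hk e
        by_cases h0 : k = 0
        · subst h0
          exact hne (by simpa using e.symm)
        · exact D (N + 3 + k) (2 * N + 7) (by omega) (by omega) (by omega) e.symm
      · intro e
        exact D (2 * N + 7) (2 * N + 8) (by omega) (by omega) (by omega) (e.symm.trans b0)
    have hb3 : f (N + 2) ≠ f (2 * N + 6) := by
      intro e
      have := P2 (N + 2) (N + 4) (by omega) (by omega)
        (by convert e using 2 <;> omega) (by convert hb2 using 2 <;> omega)
      omega
    refine pigeon N (N + 2) f (f 0) (f (2 * N + 6)) ?_ ?_ ?_ ?_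
    · intro k l hkl hl e
      exact D (N + 2 + k) (N + 2 + l) (by omega) (by omega) (by omega) e
    · intro k hk e
      by_cases h2 : k = 2
      · subst h2
        refine hc ?_
        have h := e.symm.trans b0
        convert h using 2 <;> omega
      · rcases Nat.lt_or_ge k 2 with h | h
        · exact D 0 (N + 2 + k) (by omega) (by omega) (by omega) e
        · exact D (N + 2 + k) (2 * N + 8) (by omega) (by omega) (by omega) (e.symm.trans b0)
    · intro k hk e
      by_cases h0 : k = 0
      · subst h0
        exact hb3 (by simpa using e.symm)
      · exact D (N + 2 + k) (2 * N + 6) (by omega) (by omega) (by omega) e.symm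
    · intro e
      exact D (2 * N + 6) (2 * N + 8) (by omega) (by omega) (by omega) (e.symm.trans b0)

theorem stmt8 (n : ℕ) (hn : 5 ≤ n) (w : List (Fin n))
    (hthr : lexpLE w ((n : ℚ) / (n - 1)))
    (ε : ℚ) (hε0 : 0 ≤ ε) (hε1 : ε ≤ 1 / ((n : ℚ) - 1))
    (x y : List (Fin n)) (hx : x.length = 2) (hfac : x ++ y ++ x <:+: w) :
    (((x ++ y ++ x).length : ℚ) + ε) / ((x ++ y).length : ℚ) ≤ (n : ℚ) / (n - 1) := by
  have hn1 : (0:ℚ) < (n:ℚ) - 1 := by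
    have : (5:ℚ) ≤ n := by exact_mod_cast hn
    linarith
  set u := x ++ y ++ x with hu
  set P := (x ++ y).length with hP
  have hPy : P = y.length + 2 := by
    simp only [hP, List.length_append, hx]
    omega
  have hL : u.length = P + 2 := by
    simp only [hu, hP, List.length_append, hx]
  -- the border equalities
  have hxy2 : 2 ≤ (x ++ y).length := by omega
  have hb0 : u[0]? = u[P]? := by
    have h1 : u[0]? = x[0]? := by
      rw [hu, List.append_assoc,
        List.getElem?_append_left (by omega : (0:ℕ) < x.length)]
    have h2 : u[P]? = x[0]? := by
      rw [hu, List.getElem?_append_right (by omega : (x ++ y).length ≤ P)]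
      congr 1
      omega
    rw [h1, h2]
  have hb1 : u[1]? = u[P + 1]? := by
    have h1 : u[1]? = x[1]? := by
      rw [hu, List.append_assoc,
        List.getElem?_append_left (by omega : (1:ℕ) < x.length)]
    have h2 : u[P + 1]? = x[1]? := by
      rw [hu, List.getElem?_append_right (by omega : (x ++ y).length ≤ P + 1)]
      congr 1
      omega
    rw [h1, h2]
  -- Step A : P ≥ 2n-2
  have hA := rep_bound hn hthr hfac 0 P 1 (by omega) (by omega)
    (by
      intro k hk
      interval_cases k
      · simpa using hb0
      · simpa using hb1)
  have hPge : 2 * n ≤ P + 2 := by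
    have h := hA
    push_cast at h
    have : 2 * (n:ℤ) - 2 ≤ (P:ℤ) := by nlinarith [h]
    omega
  -- Step B : P ≠ 2n-2
  have hPgt : 2 * n ≤ P + 1 := by
    by_contra hcon
    have hPeq : P = 2 * n - 2 := by omega
    obtain ⟨N, rfl⟩ : ∃ N, n = N + 5 := ⟨n - 5, by omega⟩
    have hLlen : u.length = 2 * N + 10 := by omega
    have hNpos : 0 < N + 5 := by omega
    set g : ℕ → Fin (N + 5) := fun i => (u[i]?).getD ⟨0, hNpos⟩ with hg
    have hgs : ∀ i, i < u.length → u[i]? = some (g i) := by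
      intro i hi
      rw [hg]
      simp [List.getElem?_eq_getElem hi]
    have hS : ∀ i j, i < j → j < 2 * N + 10 → g i = g j → N + 4 ≤ j - i := by
      intro i j h1 h2 e
      have hij : u[i]? = u[j]? := by
        rw [hgs i (by omega), hgs j (by omega), e]
      have h := rep_bound hn hthr hfac i (j - i) 0 (by omega) (by omega)
        (by
          intro k hk
          have : k = 0 := by omega
          subst this
          rw [show i + (j - i) + 0 = j from by omega, show i + 0 = i from by omega]
          exact hij)
      have hd : (N:ℤ) + 4 ≤ (j:ℤ) - i := by
        have hji : ((j - i : ℕ) : ℤ) = (j:ℤ) - i := by omega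
        rw [hji] at h
        push_cast at h
        nlinarith [h]
      omega
    have hP2 : ∀ i p, 1 ≤ p → i + 1 + p < 2 * N + 10 → g i = g (i + p) →
        g (i + 1) = g (i + 1 + p) → 2 * N + 8 ≤ p := by
      intro i p hp hip e0 e1
      have hij0 : u[i]? = u[i + p]? := by
        rw [hgs i (by omega), hgs (i + p) (by omega), e0]
      have hij1 : u[i + 1]? = u[i + 1 + p]? := by
        rw [hgs (i + 1) (by omega), hgs (i + 1 + p) (by omega), e1]
      have h := rep_bound hn hthr hfac i p 1 hp (by omega)
        (by
          intro k hk
          interval_cases k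
          · simpa using hij0
          · rw [show i + p + 1 = i + 1 + p from by omega]
            exact hij1)
      have : 2 * (N:ℤ) + 8 ≤ (p:ℤ) := by
        push_cast at h
        nlinarith [h]
      omega
    have hg0 : g 0 = g (2 * N + 8) := by
      have := hb0
      rw [hgs 0 (by omega), hgs P (by omega)] at this
      rw [show (2 * N + 8 : ℕ) = P from by omega]
      exact Option.some.inj this
    have hg1 : g 1 = g (2 * N + 9) := by
      have := hb1
      rw [hgs 1 (by omega), hgs (P + 1) (by omega)] at this
      rw [show (2 * N + 9 : ℕ) = P + 1 from by omega]
      exact Option.some.inj this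
    exact comb N g hS hP2 hg0 hg1
  -- final arithmetic
  have hP0 : (0:ℚ) < (P:ℚ) := by
    have : 0 < P := by omega
    exact_mod_cast this
  rw [hL, div_le_div_iff₀ hP0 hn1]
  have hc1 : 2 * (n:ℚ) - 1 ≤ (P:ℚ) := by
    have h := hPgt
    have : ((2 * n : ℕ) : ℚ) ≤ ((P + 1 : ℕ) : ℚ) := by exact_mod_cast h
    push_cast at this
    linarith
  have hc2 : ε * ((n:ℚ) - 1) ≤ 1 := by
    have h := mul_le_mul_of_nonneg_right hε1 (le_of_lt hn1)
    rwa [one_div, inv_mul_cancel₀ (ne_of_gt hn1)] at h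
  push_cast
  nlinarith [hc1, hc2, hε0, hn1]
end

section
/- Let n ≥ 5, ε ≤ 1/(n-1), and let w be a word over an n-letter alphabet all of whose factors have exponent at most n/(n-1). Suppose xyx and uvu are factors of w, each failing the strengthened bound (i.e., (|xyx|+ε)/|xy| > n/(n-1) and (|uvu|+ε)/|uv| > n/(n-1)), with |x| = |u|. Then |y| = |v|. -/
open List

lemma hasPeriod_overlap {α : Type*} (x y : List α) (hx : x ≠ []) :
    _root_.HasPeriod (x ++ y ++ x) (x ++ y).length := by
  have ha : 1 ≤ x.length := List.length_pos_iff.mpr hx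
  have hap : x.length ≤ (x ++ y).length := by simp
  refine ⟨by omega, fun i hi => ?_⟩
  have hlen : (x ++ y ++ x).length = (x ++ y).length + x.length := by simp; omega
  have hia : i < x.length := by omega
  rw [List.getElem?_append_left (show i < (x ++ y).length from lt_of_lt_of_le hia hap),
    List.getElem?_append_left hia,
    List.getElem?_append_right (show (x ++ y).length ≤ i + (x ++ y).length by omega)]
  congr 1
  omega

lemma key_lemma (n : ℕ) (hn : 5 ≤ n) (ε : ℚ) (hε : ε ≤ 1 / ((n : ℚ) - 1))
    {w x y : List (Fin n)} (hthr : lexpLE w ((n : ℚ) / (n - 1))) (hx : x ≠ [])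
    (hfac : x ++ y ++ x <:+: w)
    (hbad : (n : ℚ) / (n - 1) < (((x ++ y ++ x).length : ℚ) + ε) / ((x ++ y).length : ℚ)) :
    (x ++ y).length = (n - 1) * x.length := by
  set a := x.length with ha_def
  set p := (x ++ y).length with hp_def
  have ha : 1 ≤ a := List.length_pos_iff.mpr hx
  have hap : a ≤ p := by simp [hp_def, ha_def]
  have hper : _root_.HasPeriod (x ++ y ++ x) p := hasPeriod_overlap x y hx
  have hne : x ++ y ++ x ≠ [] := by simp [hx]
  have hmem : _root_.HasPeriod (x ++ y ++ x) (per (x ++ y ++ x)) := by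
    have h := Nat.sInf_mem (⟨p, hper⟩ : {q | _root_.HasPeriod (x ++ y ++ x) q}.Nonempty)
    exact h
  set r := per (x ++ y ++ x) with hr_def
  have hr1 : 1 ≤ r := hmem.1
  have hrle : r ≤ p := Nat.sInf_le hper
  have hthr' := hthr _ hfac hne
  have hlen3 : (x ++ y ++ x).length = p + a := by simp [hp_def, ha_def]; omega
  rw [hlen3] at hthr' hbad
  have hN1 : (0:ℚ) < (n:ℚ) - 1 := by
    have : (5:ℚ) ≤ (n:ℚ) := by exact_mod_cast hn
    linarith
  have hP : (0:ℚ) < (p:ℚ) := by exact_mod_cast lt_of_lt_of_le ha hap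
  have hA : (0:ℚ) < (a:ℚ) := by exact_mod_cast ha
  have hr0 : (0:ℚ) < (r:ℚ) := by exact_mod_cast hr1
  have hrP : (r:ℚ) ≤ (p:ℚ) := by exact_mod_cast hrle
  push_cast at hthr'
  rw [div_le_div_iff₀ hr0 hN1] at hthr'
  rw [div_lt_div_iff₀ hN1 hP] at hbad
  -- from hthr' and r ≤ p : (n-1)*a ≤ p
  have h1 : ((n:ℚ) - 1) * a ≤ p := by nlinarith
  -- from hbad and ε ≤ 1/(n-1) : p < (n-1)*a + 1
  have hε1 : ((n:ℚ) - 1) * ε ≤ 1 := by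
    have := mul_le_mul_of_nonneg_left hε (le_of_lt hN1)
    rwa [mul_one_div, div_self (ne_of_gt hN1)] at this
  have h2 : (p:ℚ) < ((n:ℚ) - 1) * a + 1 := by
    push_cast at hbad
    ring_nf at hbad hε1 ⊢
    linarith
  have hcast : ((n - 1 : ℕ) : ℚ) = (n:ℚ) - 1 := by
    have : 1 ≤ n := by omega
    push_cast [this]
    ring
  have h1' : (n - 1) * a ≤ p := by
    have : (((n - 1) * a : ℕ) : ℚ) ≤ (p:ℚ) := by push_cast [hcast]; linarith
    exact_mod_cast this
  have h2' : p < (n - 1) * a + 1 := by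
    have : ((p : ℕ) : ℚ) < (((n - 1) * a + 1 : ℕ) : ℚ) := by push_cast [hcast]; linarith
    exact_mod_cast this
  omega

theorem stmt9 (n : ℕ) (hn : 5 ≤ n) (ε : ℚ) (hε : ε ≤ 1 / ((n : ℚ) - 1))
    (w : List (Fin n)) (hthr : lexpLE w ((n : ℚ) / (n - 1)))
    (x y u v : List (Fin n)) (hx : x ≠ []) (hu : u ≠ [])
    (hfac1 : x ++ y ++ x <:+: w) (hfac2 : u ++ v ++ u <:+: w)
    (hbad1 : (n : ℚ) / (n - 1) < (((x ++ y ++ x).length : ℚ) + ε) / ((x ++ y).length : ℚ))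
    (hbad2 : (n : ℚ) / (n - 1) < (((u ++ v ++ u).length : ℚ) + ε) / ((u ++ v).length : ℚ))
    (hlen : x.length = u.length) :
    y.length = v.length := by
  have h1 := key_lemma n hn ε hε hthr hx hfac1 hbad1
  have h2 := key_lemma n hn ε hε hthr hu hfac2 hbad2
  simp only [List.length_append] at h1 h2
  rw [hlen] at h1
  omega
end

section
/- Let n ≥ 5, ε ≤ 1/(n-1), and let w be a threshold word over n letters. If a factor xyx of w is not (|x|,ε)-exponential, then per(xyx) = |xy|, i.e., the borders x realize the minimal period, so the excess |xyx| - per(xyx) equals |x|. -/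
open List

theorem stmt10 (n : ℕ) (hn : 5 ≤ n) (ε : ℚ) (hε : ε ≤ 1 / ((n : ℚ) - 1))
    (w : List (Fin n)) (hthr : lexpLE w ((n : ℚ) / (n - 1)))
    (x y : List (Fin n)) (hx : x ≠ []) (hfac : x ++ y ++ x <:+: w)
    (hbad : (n : ℚ) / (n - 1) < (((x ++ y ++ x).length : ℚ) + ε) / ((x ++ y).length : ℚ)) :
    per (x ++ y ++ x) = (x ++ y).length ∧
    (x ++ y ++ x).length - per (x ++ y ++ x) = x.length := by
  set v := x ++ y ++ x with hv
  set m := (x ++ y).length with hm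
  have hxlen : 1 ≤ x.length := List.length_pos_iff.mpr hx
  have hm1 : 1 ≤ m := by simp [hm]; omega
  have hvlen : v.length = x.length + y.length + x.length := by simp [hv]; omega
  -- v has period m
  have hper : _root_.HasPeriod v m := by
    refine ⟨hm1, fun i hi => ?_⟩
    have him : i < x.length := by
      simp [hm] at hi hvlen ⊢
      omega
    have h1 : v[i]? = x[i]? := by
      have : v = x ++ (y ++ x) := by simp [hv]
      rw [this, List.getElem?_append_left him]
    have h2 : v[i + m]? = x[i]? := by
      have : v = (x ++ y) ++ x := by simp [hv]
      rw [this, List.getElem?_append_right (by omega)]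
      congr 1
      omega
    rw [h1, h2]
  have hne : ({p | _root_.HasPeriod v p} : Set ℕ).Nonempty := ⟨m, hper⟩
  have hmem : per v ∈ {p | _root_.HasPeriod v p} := Nat.sInf_mem hne
  have hple : per v ≤ m := Nat.sInf_le hper
  have hp1 : 1 ≤ per v := hmem.1
  have hvne : v ≠ [] := by
    intro h
    rw [h] at hvlen
    simp at hvlen
    omega
  have hpm : per v = m := by
    by_contra hne'
    have hplt : per v ≤ m - 1 := by omega
    have hthr' := hthr v hfac hvne
    -- arithmetic contradiction
    have hN : (0:ℚ) < (n:ℚ) - 1 := by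
      have : (5:ℚ) ≤ (n:ℚ) := by exact_mod_cast hn
      linarith
    have hp0 : (0:ℚ) < (per v : ℚ) := by exact_mod_cast hp1
    have hm0 : (0:ℚ) < (m : ℚ) := by exact_mod_cast hm1
    rw [div_le_div_iff₀ hp0 hN] at hthr'
    rw [div_lt_div_iff₀ hN hm0] at hbad
    have hεN : ε * ((n:ℚ) - 1) ≤ 1 := by
      calc ε * ((n:ℚ) - 1) ≤ (1 / ((n:ℚ)-1)) * ((n:ℚ)-1) := by
            exact mul_le_mul_of_nonneg_right hε (le_of_lt hN)
        _ = 1 := by field_simp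
    have hplt' : (per v : ℚ) ≤ (m : ℚ) - 1 := by
      have : (per v : ℚ) ≤ ((m - 1 : ℕ) : ℚ) := by exact_mod_cast hplt
      rw [Nat.cast_sub hm1] at this
      simpa using this
    have hn5 : (5:ℚ) ≤ (n:ℚ) := by exact_mod_cast hn
    nlinarith [hbad, hthr', hεN, hplt', hn5]
  refine ⟨hpm, ?_⟩
  have hm2 : m = x.length + y.length := by simp [hm]
  omega
end

section
/- Let n ≥ 5, ε ≤ 1, and let w be a threshold word over n letters. If a factor xyx of w is not (|x|,ε)-exponential, then xyx is not extendable in w: no occurrence of xyx in w extends to an occurrence of a·xyx or xyx·b sharing the same period |xy| (i.e., with a extending the period on the left or b on the right). -/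
open List

lemma per_bounds {α : Type*} {v : List α} {p : ℕ} (h : _root_.HasPeriod v p) :
    1 ≤ per v ∧ per v ≤ p := by
  have hne : {q | _root_.HasPeriod v q}.Nonempty := ⟨p, h⟩
  have hmem := Nat.sInf_mem hne
  exact ⟨hmem.1, Nat.sInf_le h⟩

theorem stmt11 (n : ℕ) (hn : 5 ≤ n) (ε : ℚ) (hε : ε ≤ 1)
    (w : List (Fin n)) (hthr : lexpLE w ((n : ℚ) / (n - 1)))
    (x y : List (Fin n)) (hx : x ≠ []) (hfac : x ++ y ++ x <:+: w)
    (hbad : (n : ℚ) / (n - 1) < (((x ++ y ++ x).length : ℚ) + ε) / ((x ++ y).length : ℚ)) :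
    (∀ a : Fin n, a :: (x ++ y ++ x) <:+: w →
      ¬ _root_.HasPeriod (a :: (x ++ y ++ x)) (x ++ y).length) ∧
    (∀ b : Fin n, (x ++ y ++ x) ++ [b] <:+: w →
      ¬ _root_.HasPeriod ((x ++ y ++ x) ++ [b]) (x ++ y).length) := by
  have key : ∀ v : List (Fin n), v <:+: w → v ≠ [] →
      v.length = (x ++ y ++ x).length + 1 →
      ¬ _root_.HasPeriod v (x ++ y).length := by
    intro v hvw hvne hlen hper
    obtain ⟨h1, h2⟩ := per_bounds hper
    have hthrv := hthr v hvw hvne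
    have hp1 : (1 : ℚ) ≤ ((x ++ y).length : ℚ) := by
      exact_mod_cast hper.1
    have hper0 : (0 : ℚ) < (per v : ℚ) := by exact_mod_cast h1
    have hle : ((per v : ℚ)) ≤ ((x ++ y).length : ℚ) := by exact_mod_cast h2
    have hlenpos : (0 : ℚ) ≤ (v.length : ℚ) := by positivity
    have hnum : (((x ++ y ++ x).length : ℚ) + ε) ≤ (v.length : ℚ) := by
      rw [hlen]; push_cast; linarith
    have step1 : (((x ++ y ++ x).length : ℚ) + ε) / ((x ++ y).length : ℚ)
        ≤ (v.length : ℚ) / (per v : ℚ) := by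
      calc (((x ++ y ++ x).length : ℚ) + ε) / ((x ++ y).length : ℚ)
          ≤ (v.length : ℚ) / ((x ++ y).length : ℚ) := by gcongr
        _ ≤ (v.length : ℚ) / (per v : ℚ) := by gcongr
    linarith
  constructor
  · intro a ha hper
    exact key _ ha (by simp) (by simp) hper
  · intro b hb hper
    exact key _ hb (by simp) (by simp; omega) hper
end
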